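/- arXiv:2511.00008 — 3 statements merged into one kernel-verified Lean document; each statement's English description precedes it below -/
import Mathlib

section
/- Let γ > 1 be a real number and set c_V = 1/(γ−1). The internal energy density function (ρ, S) ↦ c_V · ρ^γ · exp(S/(c_V ρ)) is convex on the set {(ρ, S) ∈ ℝ × ℝ : ρ > 0}. -/
open Real Set

/-- The perspective of `x ↦ exp (b x)` is convex on the half-plane `ρ > 0`. -/
lemma perspective_exp_convexOn (b : ℝ) :
    ConvexOn ℝ {z : ℝ × ℝ | 0 < z.1} (fun z => z.1 * Real.exp (b * z.2 / z.1)) := by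
  have hS : Convex ℝ {z : ℝ × ℝ | 0 < z.1} :=
    (convex_Ioi (0 : ℝ)).linear_preimage (LinearMap.fst ℝ ℝ ℝ)
  refine ⟨hS, ?_⟩
  rintro x hx y hy a c ha hc hac
  have hx1 : 0 < x.1 := hx
  have hy1 : 0 < y.1 := hy
  have hR : 0 < a * x.1 + c * y.1 := by
    rcases lt_or_ge 0 a with ha' | ha'
    · have := mul_pos ha' hx1
      nlinarith [mul_nonneg hc hy1.le]
    · have hc1 : c = 1 := by linarith [le_antisymm ha' ha]
      have ha0 : a = 0 := by linarith
      simp [ha0, hc1]; linarith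
  set R := a * x.1 + c * y.1 with hRdef
  have hl : 0 ≤ a * x.1 / R := div_nonneg (mul_nonneg ha hx1.le) hR.le
  have hm : 0 ≤ c * y.1 / R := div_nonneg (mul_nonneg hc hy1.le) hR.le
  have hsum : a * x.1 / R + c * y.1 / R = 1 := by field_simp; rw [hRdef]
  have key := convexOn_exp.2 (mem_univ (b * x.2 / x.1)) (mem_univ (b * y.2 / y.1)) hl hm hsum
  have harg : (a * x.1 / R) • (b * x.2 / x.1) + (c * y.1 / R) • (b * y.2 / y.1)
      = b * (a * x.2 + c * y.2) / R := by
    simp only [smul_eq_mul]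
    field_simp
  rw [harg] at key
  have hmul := mul_le_mul_of_nonneg_left key hR.le
  have hrhs : R * ((a * x.1 / R) • Real.exp (b * x.2 / x.1)
      + (c * y.1 / R) • Real.exp (b * y.2 / y.1))
      = a * (x.1 * Real.exp (b * x.2 / x.1)) + c * (y.1 * Real.exp (b * y.2 / y.1)) := by
    simp only [smul_eq_mul]
    field_simp
  rw [hrhs] at hmul
  simpa [hRdef, smul_eq_mul] using hmul

/-- With `γ > 1` and `c_V = 1/(γ-1)`, the internal energy density
`(ρ, S) ↦ c_V ρ^γ exp (S/(c_V ρ))` is convex on `{(ρ, S) : ρ > 0}`. -/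
theorem stmt6 (γ : ℝ) (hγ : 1 < γ) :
    ConvexOn ℝ {z : ℝ × ℝ | 0 < z.1}
      (fun z => (1 / (γ - 1)) * z.1 ^ γ * Real.exp (z.2 / ((1 / (γ - 1)) * z.1))) := by
  have hγ0 : 0 < γ := lt_trans one_pos hγ
  have hγ1 : (0:ℝ) < γ - 1 := by linarith
  set b : ℝ := (γ - 1) / γ with hb
  set g : ℝ × ℝ → ℝ := fun z => z.1 * Real.exp (b * z.2 / z.1) with hg
  have hgconv := perspective_exp_convexOn b
  have hgpos : ∀ z : ℝ × ℝ, 0 < z.1 → 0 < g z := fun z hz =>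
    mul_pos hz (Real.exp_pos _)
  -- rewrite the target function as c_V * (g z) ^ γ
  have hfun : ∀ z : ℝ × ℝ, 0 < z.1 →
      (1 / (γ - 1)) * z.1 ^ γ * Real.exp (z.2 / ((1 / (γ - 1)) * z.1))
        = (1 / (γ - 1)) * (g z) ^ γ := by
    intro z hz
    have h1 : (g z) ^ γ = z.1 ^ γ * Real.exp (b * z.2 / z.1) ^ γ :=
      Real.mul_rpow hz.le (Real.exp_pos _).le
    have h2 : Real.exp (b * z.2 / z.1) ^ γ = Real.exp (b * z.2 / z.1 * γ) := by
      rw [Real.rpow_def_of_pos (Real.exp_pos _), Real.log_exp]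
    have h3 : b * z.2 / z.1 * γ = z.2 / ((1 / (γ - 1)) * z.1) := by
      rw [hb]
      field_simp
    rw [h1, h2, h3]
    ring
  have hS : Convex ℝ {z : ℝ × ℝ | 0 < z.1} := hgconv.1
  refine ⟨hS, ?_⟩
  intro x hx y hy a c ha hc hac
  have hx1 : (0:ℝ) < x.1 := hx
  have hy1 : (0:ℝ) < y.1 := hy
  have hcomb : (0:ℝ) < (a • x + c • y).1 := hS hx hy ha hc hac
  beta_reduce
  simp only [smul_eq_mul]
  rw [hfun _ hcomb, hfun _ hx1, hfun _ hy1]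
  have hstep1 : g (a • x + c • y) ≤ a * g x + c * g y := by
    simpa [hg, smul_eq_mul] using hgconv.2 hx hy ha hc hac
  have hstep2 : (g (a • x + c • y)) ^ γ ≤ (a * g x + c * g y) ^ γ :=
    Real.rpow_le_rpow (hgpos _ hcomb).le hstep1 hγ0.le
  have hrpow := (convexOn_rpow hγ.le).2 (mem_Ici.mpr (hgpos x hx1).le)
    (mem_Ici.mpr (hgpos y hy1).le) ha hc hac
  simp only [smul_eq_mul] at hrpow
  have hstep3 : (a * g x + c * g y) ^ γ ≤ a * (g x) ^ γ + c * (g y) ^ γ := hrpow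
  have hcv : (0:ℝ) ≤ 1 / (γ - 1) := by positivity
  calc (1 / (γ - 1)) * (g (a • x + c • y)) ^ γ
      ≤ (1 / (γ - 1)) * (a * (g x) ^ γ + c * (g y) ^ γ) :=
        mul_le_mul_of_nonneg_left (hstep2.trans hstep3) hcv
    _ = a * ((1 / (γ - 1)) * (g x) ^ γ) + c * ((1 / (γ - 1)) * (g y) ^ γ) := by ring
end

section
/- Let γ > 1 be a real number, c_V = 1/(γ−1), and M ≥ 1 a natural number. Let ρ₁,…,ρ_M be positive real numbers and S₁,…,S_M real numbers, and set ⟨ρ⟩ = (1/M)·Σ_{n=1}^M ρ_n and ⟨S⟩ = (1/M)·Σ_{n=1}^M S_n. Then (1/M)·Σ_{n=1}^M ρ_n^γ · exp(S_n/(c_V ρ_n)) ≥ ⟨ρ⟩^γ · exp(⟨S⟩/(c_V ⟨ρ⟩)). -/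
open Finset

/-- Nonnegativity of the pressure part of the Cesàro-averaged Reynolds stress
defect: with `p(ρ,S) = ρ^γ exp(S/(c_V ρ))`, `γ > 1`, `c_V = 1/(γ-1)`,
`(1/M) Σ_n p(ρ_n,S_n) ≥ p(⟨ρ⟩,⟨S⟩)` where `⟨ρ⟩, ⟨S⟩` are arithmetic means. -/
theorem stmt7 (γ : ℝ) (hγ : 1 < γ) (M : ℕ) (hM : 1 ≤ M)
    (ρ S : Fin M → ℝ) (hρ : ∀ n, 0 < ρ n) :
    let cV : ℝ := 1 / (γ - 1)
    let ρavg : ℝ := (M : ℝ)⁻¹ * ∑ n, ρ n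
    let Savg : ℝ := (M : ℝ)⁻¹ * ∑ n, S n
    (M : ℝ)⁻¹ * ∑ n, (ρ n) ^ γ * Real.exp (S n / (cV * ρ n))
      ≥ ρavg ^ γ * Real.exp (Savg / (cV * ρavg)) := by
  intro cV ρavg Savg
  have hcV : cV = 1 / (γ - 1) := rfl
  have hρadef : ρavg = (M : ℝ)⁻¹ * ∑ n, ρ n := rfl
  have hSadef : Savg = (M : ℝ)⁻¹ * ∑ n, S n := rfl
  have hc : (0 : ℝ) < γ - 1 := by linarith
  have hM0 : (0 : ℝ) < (M : ℝ) := by exact_mod_cast hM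
  haveI : Nonempty (Fin M) := Fin.pos_iff_nonempty.mp hM
  have hsum : (0 : ℝ) < ∑ n, ρ n :=
    Finset.sum_pos (fun n _ => hρ n) Finset.univ_nonempty
  have hr : 0 < ρavg := by rw [hρadef]; positivity
  set c : ℝ := γ - 1 with hcdef
  set t : Fin M → ℝ := fun n => Real.log (ρ n) + S n / ρ n with ht
  set m : ℝ := Real.log ρavg + Savg / ρavg with hm
  -- key identity: p(x,s) = x * exp(c * (log x + s/x)) for x > 0
  have ident : ∀ (x s : ℝ), 0 < x →
      x ^ γ * Real.exp (s / (cV * x)) = x * Real.exp (c * (Real.log x + s / x)) := by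
    intro x s hx
    have hx0 : x ≠ 0 := ne_of_gt hx
    have h1 : s / (cV * x) = c * (s / x) := by
      rw [hcV, hcdef]
      field_simp
    have h2 : x * Real.exp (c * (Real.log x + s / x))
        = Real.exp (Real.log x + c * (Real.log x + s / x)) := by
      rw [Real.exp_add, Real.exp_log hx]
    rw [h1, Real.rpow_def_of_pos hx, h2, ← Real.exp_add]
    congr 1
    rw [hcdef]; ring
  -- tangent bound for exp
  have pt : ∀ n, ρ n * Real.exp (c * t n)
      ≥ Real.exp (c * m) * (ρ n * (c * t n - c * m + 1)) := by
    intro n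
    have h1 : c * t n - c * m + 1 ≤ Real.exp (c * t n - c * m) :=
      Real.add_one_le_exp _
    have h2 : Real.exp (c * t n) = Real.exp (c * m) * Real.exp (c * t n - c * m) := by
      rw [← Real.exp_add]; ring_nf
    have h3 : Real.exp (c * m) * (ρ n * (c * t n - c * m + 1))
        ≤ Real.exp (c * m) * (ρ n * Real.exp (c * t n - c * m)) :=
      mul_le_mul_of_nonneg_left
        (mul_le_mul_of_nonneg_left h1 (hρ n).le) (Real.exp_pos _).le
    rw [h2, show ρ n * (Real.exp (c * m) * Real.exp (c * t n - c * m))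
        = Real.exp (c * m) * (ρ n * Real.exp (c * t n - c * m)) from by ring]
    exact h3
  -- tangent bound for log: ρ_n log ρ_n ≥ ρ_n log ρavg + (ρ_n - ρavg)
  have hlog : ∀ n, ρ n * Real.log (ρ n) ≥ ρ n * Real.log ρavg + (ρ n - ρavg) := by
    intro n
    have hd : 0 < ρavg / ρ n := div_pos hr (hρ n)
    have h1 := Real.log_le_sub_one_of_pos hd
    rw [Real.log_div hr.ne' (hρ n).ne'] at h1
    have h2 : ρ n * (ρavg / ρ n) = ρavg := by
      rw [mul_comm, div_mul_cancel₀ _ (hρ n).ne']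
    nlinarith [hρ n]
  -- sum comparison: ∑ ρ_n t_n ≥ m * ∑ ρ_n
  have hsumS : ∑ n, S n = Savg * (M : ℝ) := by
    rw [hSadef]; field_simp
  have hsumρ : ∑ n, ρ n = ρavg * (M : ℝ) := by
    rw [hρadef]; field_simp
  have htsum : ∑ n, ρ n * t n ≥ m * ∑ n, ρ n := by
    have e1 : ∑ n, ρ n * t n = (∑ n, ρ n * Real.log (ρ n)) + ∑ n, S n := by
      rw [← Finset.sum_add_distrib]
      refine Finset.sum_congr rfl fun n _ => ?_
      have hne : ρ n ≠ 0 := (hρ n).ne'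
      rw [ht]
      field_simp
    have e2 : m * ∑ n, ρ n = (Real.log ρavg) * ∑ n, ρ n + ∑ n, S n := by
      rw [hm, hsumS, hsumρ]
      field_simp
    have e3 : ∑ n, ρ n * Real.log (ρ n)
        ≥ ∑ n, (ρ n * Real.log ρavg + (ρ n - ρavg)) :=
      Finset.sum_le_sum fun n _ => hlog n
    have e4 : ∑ n, (ρ n * Real.log ρavg + (ρ n - ρavg))
        = (Real.log ρavg) * ∑ n, ρ n := by
      rw [Finset.sum_add_distrib, Finset.sum_sub_distrib, ← Finset.sum_mul]
      simp [hsumρ, mul_comm]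
    rw [e1, e2]
    linarith [e3, e4.symm ▸ e3]
  -- combine
  have main : ∑ n, (ρ n) ^ γ * Real.exp (S n / (cV * ρ n))
      ≥ Real.exp (c * m) * ∑ n, ρ n := by
    have e1 : ∑ n, (ρ n) ^ γ * Real.exp (S n / (cV * ρ n))
        = ∑ n, ρ n * Real.exp (c * t n) :=
      Finset.sum_congr rfl fun n _ => ident (ρ n) (S n) (hρ n)
    have e2 : ∑ n, ρ n * Real.exp (c * t n)
        ≥ ∑ n, Real.exp (c * m) * (ρ n * (c * t n - c * m + 1)) :=
      Finset.sum_le_sum fun n _ => pt n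
    have e3 : ∑ n, Real.exp (c * m) * (ρ n * (c * t n - c * m + 1))
        = Real.exp (c * m) * ((c * (∑ n, ρ n * t n) - c * m * (∑ n, ρ n)) + ∑ n, ρ n) := by
      have hpt : ∀ n : Fin M, Real.exp (c * m) * (ρ n * (c * t n - c * m + 1))
          = Real.exp (c * m) * c * (ρ n * t n) - Real.exp (c * m) * (c * m) * ρ n
            + Real.exp (c * m) * ρ n := fun n => by ring
      simp only [hpt, Finset.sum_add_distrib, Finset.sum_sub_distrib, ← Finset.mul_sum]
      ring
    have e4 : Real.exp (c * m) * ((c * (∑ n, ρ n * t n) - c * m * (∑ n, ρ n)) + ∑ n, ρ n)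
        ≥ Real.exp (c * m) * ∑ n, ρ n := by
      nlinarith [mul_nonneg (mul_nonneg (Real.exp_pos (c * m)).le hc.le)
        (sub_nonneg.mpr htsum)]
    rw [e1]
    calc ∑ n, ρ n * Real.exp (c * t n)
        ≥ ∑ n, Real.exp (c * m) * (ρ n * (c * t n - c * m + 1)) := e2
      _ = _ := e3
      _ ≥ Real.exp (c * m) * ∑ n, ρ n := e4
  have rhs : ρavg ^ γ * Real.exp (Savg / (cV * ρavg)) = ρavg * Real.exp (c * m) := by
    rw [ident ρavg Savg hr, hm]
  rw [rhs]
  calc (M : ℝ)⁻¹ * ∑ n, (ρ n) ^ γ * Real.exp (S n / (cV * ρ n))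
      ≥ (M : ℝ)⁻¹ * (Real.exp (c * m) * ∑ n, ρ n) := by
        apply mul_le_mul_of_nonneg_left main (inv_nonneg.mpr hM0.le)
    _ = ρavg * Real.exp (c * m) := by rw [hsumρ]; field_simp
end

section
/- Let γ > 1 be a real number, c_V = 1/(γ−1), d ≥ 1 and M ≥ 1 natural numbers, and let ρ₁,…,ρ_M > 0, m₁,…,m_M ∈ ℝ^d, S₁,…,S_M ∈ ℝ, with arithmetic means ⟨ρ⟩, ⟨m⟩, ⟨S⟩. Define the pressure p(ρ,S) = ρ^γ exp(S/(c_V ρ)), the approximate Reynolds stress defect 𝔑_M = (1/M)Σ_n (m_n⊗m_n)/ρ_n + ((1/M)Σ_n p(ρ_n,S_n))·I_d − (⟨m⟩⊗⟨m⟩)/⟨ρ⟩ − p(⟨ρ⟩,⟨S⟩)·I_d, and the approximate energy defect 𝔈_M = (1/M)Σ_n [ |m_n|²/(2ρ_n) + c_V ρ_n^γ exp(S_n/(c_V ρ_n)) ] − |⟨m⟩|²/(2⟨ρ⟩) − c_V ⟨ρ⟩^γ exp(⟨S⟩/(c_V ⟨ρ⟩)). Then min{2, d(γ−1)}·𝔈_M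 ≤ tr 𝔑_M ≤ max{2, d(γ−1)}·𝔈_M. -/
open Finset

set_option maxHeartbeats 1000000


private lemma stmt9_aux (γ d' K P : ℝ) (hγ : 1 < γ) (hK : 0 ≤ K) (hP : 0 ≤ P) :
    min 2 (d' * (γ - 1)) * (K / 2 + 1 / (γ - 1) * P) ≤ K + d' * P ∧
    K + d' * P ≤ max 2 (d' * (γ - 1)) * (K / 2 + 1 / (γ - 1) * P) := by
  have hγ1 : (0:ℝ) < γ - 1 := by linarith
  have hf3 : d' * (γ - 1) * (1 / (γ - 1) * P) = d' * P := by
    field_simp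
  have hcP : 0 ≤ 1 / (γ - 1) * P := by positivity
  constructor
  · have h1 : min 2 (d' * (γ - 1)) ≤ 2 := min_le_left _ _
    have h2 : min 2 (d' * (γ - 1)) ≤ d' * (γ - 1) := min_le_right _ _
    have f1 := mul_le_mul_of_nonneg_right h1 (by linarith : 0 ≤ K / 2)
    have f2 := mul_le_mul_of_nonneg_right h2 hcP
    have e : min 2 (d' * (γ - 1)) * (K / 2 + 1 / (γ - 1) * P)
        = min 2 (d' * (γ - 1)) * (K / 2) + min 2 (d' * (γ - 1)) * (1 / (γ - 1) * P) := by ring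
    linarith
  · have h1 : (2:ℝ) ≤ max 2 (d' * (γ - 1)) := le_max_left _ _
    have h2 : d' * (γ - 1) ≤ max 2 (d' * (γ - 1)) := le_max_right _ _
    have f1 := mul_le_mul_of_nonneg_right h1 (by linarith : 0 ≤ K / 2)
    have f2 := mul_le_mul_of_nonneg_right h2 hcP
    have e : max 2 (d' * (γ - 1)) * (K / 2 + 1 / (γ - 1) * P)
        = max 2 (d' * (γ - 1)) * (K / 2) + max 2 (d' * (γ - 1)) * (1 / (γ - 1) * P) := by ring
    linarith

/-- Trace compatibility for the Cesàro-averaged defects: with pressure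
`p(ρ,S) = ρ^γ exp(S/(c_V ρ))`, the approximate Reynolds stress defect `𝔑_M` and
approximate energy defect `𝔈_M` satisfy
`min{2, d(γ-1)}·𝔈_M ≤ tr 𝔑_M ≤ max{2, d(γ-1)}·𝔈_M`. -/
theorem stmt9 (γ : ℝ) (hγ : 1 < γ) (d M : ℕ) (hd : 1 ≤ d) (hM : 1 ≤ M)
    (ρ : Fin M → ℝ) (hρ : ∀ n, 0 < ρ n)
    (m : Fin M → Fin d → ℝ) (S : Fin M → ℝ) :
    let cV : ℝ := 1 / (γ - 1)
    let p : ℝ → ℝ → ℝ := fun r s => r ^ γ * Real.exp (s / (cV * r))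
    let ρavg : ℝ := (M : ℝ)⁻¹ * ∑ n, ρ n
    let mavg : Fin d → ℝ := fun i => (M : ℝ)⁻¹ * ∑ n, m n i
    let Savg : ℝ := (M : ℝ)⁻¹ * ∑ n, S n
    let RM : Matrix (Fin d) (Fin d) ℝ :=
      (M : ℝ)⁻¹ • (∑ n, Matrix.of fun i j => m n i * m n j / ρ n)
        + ((M : ℝ)⁻¹ * ∑ n, p (ρ n) (S n)) • (1 : Matrix (Fin d) (Fin d) ℝ)
        - Matrix.of (fun i j => mavg i * mavg j / ρavg)
        - p ρavg Savg • (1 : Matrix (Fin d) (Fin d) ℝ)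
    let EM : ℝ :=
      (M : ℝ)⁻¹ * ∑ n, ((∑ i, (m n i) ^ 2) / (2 * ρ n)
          + cV * (ρ n) ^ γ * Real.exp (S n / (cV * ρ n)))
        - (∑ i, (mavg i) ^ 2) / (2 * ρavg)
        - cV * ρavg ^ γ * Real.exp (Savg / (cV * ρavg))
    min 2 ((d : ℝ) * (γ - 1)) * EM ≤ Matrix.trace RM ∧
      Matrix.trace RM ≤ max 2 ((d : ℝ) * (γ - 1)) * EM := by
  intro cV p ρavg mavg Savg RM EM
  have hγ1 : (0:ℝ) < γ - 1 := by linarith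
  have hγ0 : (0:ℝ) < γ := by linarith
  have hcV : (0:ℝ) < cV := by positivity
  have hMpos : (0:ℝ) < (M:ℝ) := by
    have : 0 < M := hM
    exact_mod_cast this
  have hsr : (0:ℝ) < ∑ n, ρ n := Finset.sum_pos (fun n _ => hρ n) ⟨⟨0, hM⟩, Finset.mem_univ _⟩
  have hρavg : (0:ℝ) < ρavg := by
    show (0:ℝ) < (M : ℝ)⁻¹ * ∑ n, ρ n; positivity
  -- p rewritten: p r s = (r * exp(a * s / r)) ^ γ  with a = (γ-1)/γ
  set a : ℝ := (γ - 1) / γ with ha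
  have hp_eq : ∀ r s : ℝ, 0 < r → p r s = (r * Real.exp (a * s / r)) ^ γ := by
    intro r s hr
    have he : (0:ℝ) ≤ Real.exp (a * s / r) := (Real.exp_pos _).le
    rw [Real.mul_rpow hr.le he, ← Real.exp_mul]
    show r ^ γ * Real.exp (s / (cV * r)) = r ^ γ * Real.exp (a * s / r * γ)
    congr 1
    congr 1
    show s / (1 / (γ - 1) * r) = (γ - 1) / γ * s / r * γ
    field_simp
  set Z : Fin M → ℝ := fun n => ρ n * Real.exp (a * S n / ρ n) with hZ
  have hZpos : ∀ n, 0 < Z n := fun n => mul_pos (hρ n) (Real.exp_pos _)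
  -- P : pressure defect, nonneg
  have hP : p ρavg Savg ≤ (M : ℝ)⁻¹ * ∑ n, p (ρ n) (S n) := by
    have h1 : ρavg * Real.exp (a * Savg / ρavg) ≤ (M : ℝ)⁻¹ * ∑ n, Z n := by
      -- Jensen for exp with weights ρ n / Σρ
      have hw : ∀ n ∈ Finset.univ, (0:ℝ) ≤ ρ n / ∑ k, ρ k :=
        fun n _ => div_nonneg (hρ n).le hsr.le
      have hw1 : ∑ n, ρ n / ∑ k, ρ k = 1 := by
        rw [← Finset.sum_div]; exact div_self hsr.ne'
      have hmem : ∀ n ∈ Finset.univ, (a * S n / ρ n) ∈ (Set.univ : Set ℝ) :=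
        fun _ _ => Set.mem_univ _
      have hj := convexOn_exp.map_sum_le hw hw1 hmem
      simp only [smul_eq_mul] at hj
      have hsum : ∑ n, (ρ n / ∑ k, ρ k) * (a * S n / ρ n) = a * Savg / ρavg := by
        have h1 : ∀ n, (ρ n / ∑ k, ρ k) * (a * S n / ρ n) = a / (∑ k, ρ k) * S n := by
          intro n
          have h := (hρ n).ne'
          field_simp
        rw [Finset.sum_congr rfl fun n _ => h1 n, ← Finset.mul_sum]
        show a / (∑ k, ρ k) * ∑ n, S n = a * ((M:ℝ)⁻¹ * ∑ n, S n) / ((M:ℝ)⁻¹ * ∑ k, ρ k)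
        have h2 := hsr.ne'
        have h3 := hMpos.ne'
        field_simp
        try ring
      rw [hsum] at hj
      calc ρavg * Real.exp (a * Savg / ρavg)
          ≤ ρavg * ∑ n, (ρ n / ∑ k, ρ k) * Real.exp (a * S n / ρ n) :=
            mul_le_mul_of_nonneg_left hj hρavg.le
        _ = (M : ℝ)⁻¹ * ∑ n, Z n := by
            rw [Finset.mul_sum, Finset.mul_sum]
            refine Finset.sum_congr rfl fun n _ => ?_
            simp only [hZ]
            have hρa : ρavg = (M:ℝ)⁻¹ * ∑ k, ρ k := rfl
            rw [hρa]
            have h2 := hsr.ne'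
            have h3 := hMpos.ne'
            field_simp
    have h2 : ((M : ℝ)⁻¹ * ∑ n, Z n) ^ γ ≤ (M : ℝ)⁻¹ * ∑ n, Z n ^ γ := by
      have hw : ∀ n ∈ (Finset.univ : Finset (Fin M)), (0:ℝ) ≤ (M:ℝ)⁻¹ :=
        fun _ _ => (inv_pos.2 hMpos).le
      have hw1 : ∑ _n : Fin M, (M:ℝ)⁻¹ = 1 := by
        simp [Finset.sum_const]
        field_simp
      have := Real.rpow_arith_mean_le_arith_mean_rpow Finset.univ (fun _ => (M:ℝ)⁻¹) Z hw hw1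
        (fun n _ => (hZpos n).le) hγ.le
      rw [← Finset.mul_sum, ← Finset.mul_sum] at this
      exact this
    calc p ρavg Savg = (ρavg * Real.exp (a * Savg / ρavg)) ^ γ := hp_eq _ _ hρavg
      _ ≤ ((M : ℝ)⁻¹ * ∑ n, Z n) ^ γ :=
          Real.rpow_le_rpow (by positivity) h1 hγ0.le
      _ ≤ (M : ℝ)⁻¹ * ∑ n, Z n ^ γ := h2
      _ = (M : ℝ)⁻¹ * ∑ n, p (ρ n) (S n) := by
          congr 1
          exact Finset.sum_congr rfl fun n _ => (hp_eq _ _ (hρ n)).symm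
  -- K : kinetic defect, nonneg
  have hK : (∑ i, (mavg i) ^ 2) / ρavg ≤ (M : ℝ)⁻¹ * ∑ n, (∑ i, (m n i) ^ 2) / ρ n := by
    have hswap : (M : ℝ)⁻¹ * ∑ n, (∑ i, (m n i) ^ 2) / ρ n
        = (M : ℝ)⁻¹ * ∑ i, ∑ n, (m n i) ^ 2 / ρ n := by
      congr 1
      rw [Finset.sum_congr rfl fun n _ => Finset.sum_div Finset.univ (fun i => (m n i)^2) (ρ n)]
      exact Finset.sum_comm
    rw [hswap]
    have hterm : ∀ i, (mavg i) ^ 2 / ρavg = (M:ℝ)⁻¹ * ((∑ n, m n i) ^ 2 / ∑ n, ρ n) := by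
      intro i
      show ((M:ℝ)⁻¹ * ∑ n, m n i) ^ 2 / ((M:ℝ)⁻¹ * ∑ n, ρ n) = _
      field_simp
    rw [Finset.sum_div, Finset.sum_congr rfl fun i _ => hterm i, ← Finset.mul_sum]
    refine mul_le_mul_of_nonneg_left ?_ (by positivity)
    refine Finset.sum_le_sum fun i _ => ?_
    exact sq_sum_div_le_sum_sq_div _ _ (fun n _ => hρ n)
  -- abbreviate
  set A : ℝ := (M : ℝ)⁻¹ * ∑ n, (∑ i, (m n i) ^ 2) / ρ n with hA
  set B : ℝ := (∑ i, (mavg i) ^ 2) / ρavg with hB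
  set C : ℝ := (M : ℝ)⁻¹ * ∑ n, p (ρ n) (S n) with hC
  set D : ℝ := p ρavg Savg with hD
  -- trace computation
  have htr : Matrix.trace RM = (A - B) + (d : ℝ) * (C - D) := by
    show Matrix.trace ((M : ℝ)⁻¹ • (∑ n, Matrix.of fun i j => m n i * m n j / ρ n)
        + C • (1 : Matrix (Fin d) (Fin d) ℝ)
        - Matrix.of (fun i j => mavg i * mavg j / ρavg)
        - D • (1 : Matrix (Fin d) (Fin d) ℝ)) = _
    rw [Matrix.trace_sub, Matrix.trace_sub, Matrix.trace_add, Matrix.trace_smul,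
      Matrix.trace_smul, Matrix.trace_smul, Matrix.trace_sum, Matrix.trace_one]
    have h1 : ∀ n, Matrix.trace (Matrix.of fun i j => m n i * m n j / ρ n)
        = (∑ i, (m n i) ^ 2) / ρ n := by
      intro n
      rw [Finset.sum_div]
      refine Finset.sum_congr rfl fun i _ => ?_
      show m n i * m n i / ρ n = (m n i) ^ 2 / ρ n
      ring
    have h2 : Matrix.trace (Matrix.of fun i j => mavg i * mavg j / ρavg) = B := by
      rw [hB, Finset.sum_div]
      refine Finset.sum_congr rfl fun i _ => ?_
      show mavg i * mavg i / ρavg = (mavg i) ^ 2 / ρavg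
      ring
    rw [Finset.sum_congr rfl fun n _ => h1 n, h2]
    show (M:ℝ)⁻¹ • (∑ n, (∑ i, (m n i) ^ 2) / ρ n) + C • (Fintype.card (Fin d) : ℝ) - B
        - D • (Fintype.card (Fin d) : ℝ) = A - B + (d:ℝ) * (C - D)
    simp only [Fintype.card_fin, smul_eq_mul, hA]
    ring
  -- energy identity
  have hEM : EM = (A - B) / 2 + cV * (C - D) := by
    show (M : ℝ)⁻¹ * ∑ n, ((∑ i, (m n i) ^ 2) / (2 * ρ n)
          + cV * (ρ n) ^ γ * Real.exp (S n / (cV * ρ n)))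
        - (∑ i, (mavg i) ^ 2) / (2 * ρavg)
        - cV * ρavg ^ γ * Real.exp (Savg / (cV * ρavg)) = _
    have hsplit : ∑ n, ((∑ i, (m n i) ^ 2) / (2 * ρ n)
          + cV * (ρ n) ^ γ * Real.exp (S n / (cV * ρ n)))
        = (∑ n, (∑ i, (m n i) ^ 2) / ρ n) / 2 + cV * ∑ n, p (ρ n) (S n) := by
      rw [Finset.sum_add_distrib, Finset.sum_div, Finset.mul_sum]
      congr 1
      · refine Finset.sum_congr rfl fun n _ => ?_
        rw [div_div]
        ring_nf
      · refine Finset.sum_congr rfl fun n _ => ?_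
        show cV * (ρ n) ^ γ * Real.exp (S n / (cV * ρ n))
          = cV * ((ρ n) ^ γ * Real.exp (S n / (cV * ρ n)))
        ring
    rw [hsplit]
    have hB2 : (∑ i, (mavg i) ^ 2) / (2 * ρavg) = B / 2 := by
      rw [hB, div_div, mul_comm]
    have hD2 : cV * ρavg ^ γ * Real.exp (Savg / (cV * ρavg)) = cV * D := by
      show _ = cV * (ρavg ^ γ * Real.exp (Savg / (cV * ρavg)))
      ring
    rw [hB2, hD2, hA, hC]
    ring
  have hKnn : 0 ≤ A - B := by linarith
  have hPnn : 0 ≤ C - D := by linarith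
  rw [htr, hEM]
  set K := A - B
  set P := C - D
  have hcVγ : cV * (γ - 1) = 1 := by
    show 1 / (γ - 1) * (γ - 1) = 1
    field_simp
  have hcv : cV = 1 / (γ - 1) := rfl
  rw [hcv]
  exact stmt9_aux γ (d : ℝ) K P hγ hKnn hPnn
end
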